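/- (Dodgson determinant identity) Let M be an n×n matrix over a commutative ring and let i ≠ j be indices. Write M^{I,J} for the matrix M with rows in I and columns in J deleted. Then det M^{i,i} · det M^{j,j} − det M^{i,j} · det M^{j,i} = det M · det M^{ij,ij}. -/

import Mathlib

open Matrix Equiv

private lemma dodgson_submatrix_sum_elim {R : Type*} {m₁ m₂ n₁ n₂ k l : Type*}
    (M : Matrix k l R) (r₁ : m₁ → k) (r₂ : m₂ → k) (c₁ : n₁ → l) (c₂ : n₂ → l) :
    M.submatrix (Sum.elim r₁ r₂) (Sum.elim c₁ c₂)
      = Matrix.fromBlocks (M.submatrix r₁ c₁) (M.submatrix r₁ c₂)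
          (M.submatrix r₂ c₁) (M.submatrix r₂ c₂) := by
  ext (a | a) (b | b) <;> rfl

private lemma dodgson_det_mul_det {R : Type*} [CommRing R] {m m' : Type*}
    [DecidableEq m] [Fintype m] [DecidableEq m'] [Fintype m']
    (N₁ N₂ : Matrix m m R) (e e' : m' ≃ m) :
    (N₁.submatrix e e').det * (N₂.submatrix e' e).det = N₁.det * N₂.det := by
  have h1 : N₁.submatrix e e' = (N₁.submatrix e e).submatrix id ⇑(e'.trans e.symm) := by
    ext a b; simp
  have h2 : N₂.submatrix e' e = (N₂.submatrix e' e').submatrix id ⇑(e.trans e'.symm) := by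
    ext a b; simp
  rw [h1, h2, Matrix.det_permute', Matrix.det_permute', Matrix.det_submatrix_equiv_self,
    Matrix.det_submatrix_equiv_self]
  have hinv : e.trans e'.symm = (e'.trans e.symm)⁻¹ := rfl
  have hs : ((Perm.sign (e'.trans e.symm) : ℤ) : R) * ((Perm.sign (e.trans e'.symm) : ℤ) : R)
      = 1 := by
    rw [hinv, map_inv, ← Int.cast_mul, ← Units.val_mul, mul_inv_cancel, Units.val_one,
      Int.cast_one]
  calc ((Perm.sign (e'.trans e.symm) : ℤ) : R) * N₁.det
        * (((Perm.sign (e.trans e'.symm) : ℤ) : R) * N₂.det)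
      = (((Perm.sign (e'.trans e.symm) : ℤ) : R)
          * ((Perm.sign (e.trans e'.symm) : ℤ) : R)) * (N₁.det * N₂.det) := by ring
    _ = N₁.det * N₂.det := by rw [hs, one_mul]

private lemma dodgson_field {K : Type*} [Field K] {n : ℕ}
    (M : Matrix (Fin (n + 2)) (Fin (n + 2)) K) (i j : Fin (n + 2)) (hij : i ≠ j)
    (j' : Fin (n + 1)) (hj' : i.succAbove j' = j)
    (hA : (M.submatrix (i.succAbove ∘ j'.succAbove) (i.succAbove ∘ j'.succAbove)).det ≠ 0) :
    (M.submatrix i.succAbove i.succAbove).det * (M.submatrix j.succAbove j.succAbove).det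
      - (M.submatrix i.succAbove j.succAbove).det * (M.submatrix j.succAbove i.succAbove).det
      = M.det * ((M.submatrix i.succAbove i.succAbove).submatrix j'.succAbove j'.succAbove).det := by
  classical
  set g : Fin n → Fin (n + 2) := i.succAbove ∘ j'.succAbove with hg_def
  have hg_inj : Function.Injective g :=
    Fin.succAbove_right_injective.comp Fin.succAbove_right_injective
  have hg_ne_i : ∀ x, g x ≠ i := fun x => Fin.succAbove_ne i _
  have hg_ne_j : ∀ x, g x ≠ j := by
    intro x h
    exact Fin.succAbove_ne j' x (Fin.succAbove_right_injective (h.trans hj'.symm))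
  set A : Matrix (Fin n) (Fin n) K := M.submatrix g g with hA_def
  haveI : Invertible A := Matrix.invertibleOfIsUnitDet A hA.isUnit
  -- the companion index i' with j.succAbove i' = i
  obtain ⟨i', hi'⟩ := Fin.exists_succAbove_eq hij
  -- lift g through j.succAbove
  have hk : ∀ x : Fin n, ∃ y, j.succAbove y = g x := fun x =>
    Fin.exists_succAbove_eq (hg_ne_j x)
  choose k hk' using hk
  -- the two "delete one index" parametrizations
  set ti : Fin n ⊕ Fin 1 → Fin (n + 1) := Sum.elim j'.succAbove (fun _ => j') with hti_def
  set tj : Fin n ⊕ Fin 1 → Fin (n + 1) := Sum.elim k (fun _ => i') with htj_def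
  have hti_comp : i.succAbove ∘ ti = Sum.elim g (fun _ => j) := by
    funext x; cases x with
    | inl a => rfl
    | inr a => exact hj'
  have htj_comp : j.succAbove ∘ tj = Sum.elim g (fun _ => i) := by
    funext x; cases x with
    | inl a => exact hk' a
    | inr a => exact hi'
  have helim_inj : ∀ z : Fin (n + 2), (∀ x, g x ≠ z) →
      Function.Injective (Sum.elim g (fun _ : Fin 1 => z)) := by
    intro z hz x y hxy
    cases x with
    | inl a => cases y with
      | inl b => exact congrArg Sum.inl (hg_inj hxy)
      | inr b => exact absurd hxy (hz a)
    | inr a => cases y with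
      | inl b => exact absurd hxy.symm (hz b)
      | inr b => simp [Subsingleton.elim a b]
  have hcard : Fintype.card (Fin n ⊕ Fin 1) = Fintype.card (Fin (n + 1)) := by simp
  have hti_bij : Function.Bijective ti := by
    refine (Fintype.bijective_iff_injective_and_card ti).mpr ⟨?_, hcard⟩
    have : Function.Injective (i.succAbove ∘ ti) := by
      rw [hti_comp]; exact helim_inj j hg_ne_j
    exact this.of_comp
  have htj_bij : Function.Bijective tj := by
    refine (Fintype.bijective_iff_injective_and_card tj).mpr ⟨?_, hcard⟩
    have : Function.Injective (j.succAbove ∘ tj) := by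
      rw [htj_comp]; exact helim_inj i hg_ne_i
    exact this.of_comp
  set ei : Fin n ⊕ Fin 1 ≃ Fin (n + 1) := Equiv.ofBijective ti hti_bij with hei_def
  set ej : Fin n ⊕ Fin 1 ≃ Fin (n + 1) := Equiv.ofBijective tj htj_bij with hej_def
  -- full matrix
  set f : Fin n ⊕ Fin 2 → Fin (n + 2) := Sum.elim g ![i, j] with hf_def
  have hf_bij : Function.Bijective f := by
    refine (Fintype.bijective_iff_injective_and_card f).mpr ⟨?_, by simp⟩
    intro x y hxy
    cases x with
    | inl a => cases y with
      | inl b => exact congrArg Sum.inl (hg_inj hxy)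
      | inr b =>
          exfalso; fin_cases b
          · exact hg_ne_i a hxy
          · exact hg_ne_j a hxy
    | inr a => cases y with
      | inl b =>
          exfalso; fin_cases a
          · exact hg_ne_i b hxy.symm
          · exact hg_ne_j b hxy.symm
      | inr b =>
          congr 1
          fin_cases a <;> fin_cases b <;> first | rfl | exact absurd hxy hij | exact absurd hxy.symm hij
  set e2 : Fin n ⊕ Fin 2 ≃ Fin (n + 2) := Equiv.ofBijective f hf_bij with he2_def
  -- Schur complement
  set T : Matrix (Fin 2) (Fin 2) K :=
    M.submatrix ![i, j] ![i, j] - M.submatrix ![i, j] g * ⅟A * M.submatrix g ![i, j] with hT_def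
  have Tentry : ∀ (a b : Fin 2),
      (M.submatrix (fun _ : Fin 1 => ![i, j] a) (fun _ : Fin 1 => ![i, j] b)
        - M.submatrix (fun _ : Fin 1 => ![i, j] a) g * ⅟A
          * M.submatrix g (fun _ : Fin 1 => ![i, j] b)).det = T a b := by
    intro a b
    rw [Matrix.det_fin_one]
    fin_cases a <;> fin_cases b <;>
      (simp only [hT_def, Matrix.sub_apply, Matrix.mul_apply, Matrix.submatrix_apply] <;> simp)
  -- determinant of the full matrix
  have hdetM : M.det = A.det * T.det := by
    have h1 : M.submatrix f f = Matrix.fromBlocks A (M.submatrix g ![i, j])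
        (M.submatrix ![i, j] g) (M.submatrix ![i, j] ![i, j]) := by
      rw [hf_def, dodgson_submatrix_sum_elim]
    calc M.det = (M.submatrix e2 e2).det := (Matrix.det_submatrix_equiv_self e2 M).symm
      _ = A.det * T.det := by
          show (M.submatrix f f).det = _
          rw [h1, Matrix.det_fromBlocks₁₁]
  -- the one-row/one-column-deleted determinants
  -- compute each deleted determinant as a block determinant
  have block_det : ∀ (zr zc : Fin (n + 2)) (a b : Fin 2)
      (t s : Fin n ⊕ Fin 1 → Fin (n + 1)),
      zr.succAbove ∘ t = Sum.elim g (fun _ => ![i,j] a) →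
      zc.succAbove ∘ s = Sum.elim g (fun _ => ![i,j] b) →
      (M.submatrix zr.succAbove zc.succAbove).submatrix t s
        = Matrix.fromBlocks A (M.submatrix g (fun _ : Fin 1 => ![i,j] b))
            (M.submatrix (fun _ : Fin 1 => ![i,j] a) g)
            (M.submatrix (fun _ : Fin 1 => ![i,j] a) (fun _ : Fin 1 => ![i,j] b)) := by
    intro zr zc a b t s hct hcs
    rw [Matrix.submatrix_submatrix, hct, hcs, dodgson_submatrix_sum_elim]
  have hdet_block : ∀ (a b : Fin 2),
      (Matrix.fromBlocks A (M.submatrix g (fun _ : Fin 1 => ![i,j] b))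
            (M.submatrix (fun _ : Fin 1 => ![i,j] a) g)
            (M.submatrix (fun _ : Fin 1 => ![i,j] a) (fun _ : Fin 1 => ![i,j] b))).det
        = A.det * T a b := by
    intro a b
    rw [Matrix.det_fromBlocks₁₁, Tentry]
  have hdet_ii : (M.submatrix i.succAbove i.succAbove).det = A.det * T 1 1 := by
    have := block_det i i 1 1 ti ti (by simpa using hti_comp) (by simpa using hti_comp)
    calc (M.submatrix i.succAbove i.succAbove).det
        = ((M.submatrix i.succAbove i.succAbove).submatrix ei ei).det :=
          (Matrix.det_submatrix_equiv_self ei _).symm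
      _ = A.det * T 1 1 := by
          show ((M.submatrix i.succAbove i.succAbove).submatrix ti ti).det = _
          rw [this, hdet_block]
  have hdet_jj : (M.submatrix j.succAbove j.succAbove).det = A.det * T 0 0 := by
    have := block_det j j 0 0 tj tj (by simpa using htj_comp) (by simpa using htj_comp)
    calc (M.submatrix j.succAbove j.succAbove).det
        = ((M.submatrix j.succAbove j.succAbove).submatrix ej ej).det :=
          (Matrix.det_submatrix_equiv_self ej _).symm
      _ = A.det * T 0 0 := by
          show ((M.submatrix j.succAbove j.succAbove).submatrix tj tj).det = _
          rw [this, hdet_block]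
  have hdet_mixed : (M.submatrix i.succAbove j.succAbove).det
      * (M.submatrix j.succAbove i.succAbove).det
      = (A.det * T 1 0) * (A.det * T 0 1) := by
    have h1 := block_det i j 1 0 ti tj (by simpa using hti_comp) (by simpa using htj_comp)
    have h2 := block_det j i 0 1 tj ti (by simpa using htj_comp) (by simpa using hti_comp)
    calc (M.submatrix i.succAbove j.succAbove).det * (M.submatrix j.succAbove i.succAbove).det
        = ((M.submatrix i.succAbove j.succAbove).submatrix ei ej).det
          * ((M.submatrix j.succAbove i.succAbove).submatrix ej ei).det :=
          (dodgson_det_mul_det _ _ ei ej).symm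
      _ = (A.det * T 1 0) * (A.det * T 0 1) := by
          show ((M.submatrix i.succAbove j.succAbove).submatrix ti tj).det
            * ((M.submatrix j.succAbove i.succAbove).submatrix tj ti).det = _
          rw [h1, h2, hdet_block, hdet_block]
  have hminor : (M.submatrix i.succAbove i.succAbove).submatrix j'.succAbove j'.succAbove = A := by
    rw [Matrix.submatrix_submatrix]
  rw [hdet_ii, hdet_jj, hdet_mixed, hminor, hdetM, Matrix.det_fin_two]
  ring

private lemma dodgson_map_det {R S : Type*} [CommRing R] [CommRing S] {m : Type*}
    [DecidableEq m] [Fintype m] (f : R →+* S) (N : Matrix m m R) :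
    f N.det = (N.map f).det :=
  f.map_det N

theorem dodgson_identity {R : Type*} [CommRing R] {n : ℕ}
    (M : Matrix (Fin (n + 2)) (Fin (n + 2)) R) (i j : Fin (n + 2)) (hij : i ≠ j)
    (j' : Fin (n + 1)) (hj' : i.succAbove j' = j) :
    (M.submatrix i.succAbove i.succAbove).det * (M.submatrix j.succAbove j.succAbove).det
      - (M.submatrix i.succAbove j.succAbove).det * (M.submatrix j.succAbove i.succAbove).det
      = M.det * ((M.submatrix i.succAbove i.succAbove).submatrix j'.succAbove j'.succAbove).det := by
  classical
  set X : Matrix (Fin (n + 2)) (Fin (n + 2)) (MvPolynomial (Fin (n + 2) × Fin (n + 2)) ℤ) :=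
    Matrix.of (fun a b => MvPolynomial.X (a, b)) with hX_def
  set g : Fin n → Fin (n + 2) := i.succAbove ∘ j'.succAbove with hg_def
  have hg_inj : Function.Injective g :=
    Fin.succAbove_right_injective.comp Fin.succAbove_right_injective
  -- the generic complementary minor is nonzero
  have hXA : (X.submatrix g g).det ≠ 0 := by
    intro h0
    set ev : MvPolynomial (Fin (n + 2) × Fin (n + 2)) ℤ →+* ℤ := (MvPolynomial.eval
        (fun p : Fin (n + 2) × Fin (n + 2) =>
          if ∃ s : Fin n, g s = p.1 ∧ g s = p.2 then (1 : ℤ) else 0)) with hev_def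
    have hone : (X.submatrix g g).map ev = (1 : Matrix (Fin n) (Fin n) ℤ) := by
      ext a b
      have h1 : ((X.submatrix g g).map ev) a b
          = if ∃ s : Fin n, g s = g a ∧ g s = g b then (1 : ℤ) else 0 := by
        simp [hev_def, hX_def]
      rw [h1, Matrix.one_apply]
      by_cases hab : a = b
      · subst hab
        rw [if_pos ⟨a, rfl, rfl⟩, if_pos rfl]
      · rw [if_neg, if_neg hab]
        rintro ⟨s, hs1, hs2⟩
        exact hab ((hg_inj hs1).symm.trans (hg_inj hs2))
    have : (1 : ℤ) = 0 := by
      calc (1 : ℤ) = ((X.submatrix g g).map ev).det := by rw [hone, Matrix.det_one]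
        _ = ev ((X.submatrix g g).det) := (dodgson_map_det ev _).symm
        _ = 0 := by rw [h0, map_zero]
    exact one_ne_zero this
  have hinj : Function.Injective (algebraMap (MvPolynomial (Fin (n + 2) × Fin (n + 2)) ℤ)
      (FractionRing (MvPolynomial (Fin (n + 2) × Fin (n + 2)) ℤ))) :=
    IsFractionRing.injective _ _
  set ψ := algebraMap (MvPolynomial (Fin (n + 2) × Fin (n + 2)) ℤ)
      (FractionRing (MvPolynomial (Fin (n + 2) × Fin (n + 2)) ℤ)) with hψ_def
  have keyK := dodgson_field (X.map ψ) i j hij j' hj' ?hA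
  case hA =>
    show ((X.map ψ).submatrix g g).det ≠ 0
    rw [Matrix.submatrix_map, ← dodgson_map_det]
    intro h
    exact hXA (hinj (by rw [h, map_zero]))
  -- transfer to the polynomial ring
  have keyP : (X.submatrix i.succAbove i.succAbove).det
        * (X.submatrix j.succAbove j.succAbove).det
      - (X.submatrix i.succAbove j.succAbove).det * (X.submatrix j.succAbove i.succAbove).det
      = X.det * ((X.submatrix i.succAbove i.succAbove).submatrix j'.succAbove j'.succAbove).det := by
    apply hinj
    simp only [_root_.map_sub, _root_.map_mul, dodgson_map_det]
    simpa only [Matrix.submatrix_map] using keyK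
  -- transfer to R
  set φ : MvPolynomial (Fin (n + 2) × Fin (n + 2)) ℤ →+* R :=
    MvPolynomial.eval₂Hom (Int.castRingHom R) (fun p => M p.1 p.2) with hφ_def
  have h2 := congrArg φ keyP
  simp only [_root_.map_sub, _root_.map_mul, dodgson_map_det] at h2
  simp only [← Matrix.submatrix_map] at h2
  have hXM : X.map φ = M := by
    ext a b
    simp [hX_def, hφ_def]
  rwa [hXM] at h2
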